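/- Let S be a semigroup, μ₁,μ₂ nonzero multiplicative functions on S with μ₁ ≠ μ₂, A₁ an additive function on S∖I_{μ₁}, and A₂ an additive function on S∖I_{μ₂}. If Ψ_{μ₁}(A₁)(x) + Ψ_{μ₂}(A₂)(x) = Σ_{j=1}^N c_j χ_j(x) for all x ∈ S, where c_j ∈ ℂ and χ₁,…,χ_N are multiplicative functions on S, then Ψ_{μ₁}(A₁)(x) + Ψ_{μ₂}(A₂)(x) = 0 for all x ∈ S. -/

import Mathlib

open scoped BigOperators

variable {S : Type*}

/-- A multiplicative function on a semigroup `S`. -/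
def IsMultiplicativeFn [Semigroup S] (χ : S → ℂ) : Prop :=
  ∀ x y, χ (x * y) = χ x * χ y

/-- An additive function on a semigroup `S`. -/
def IsAdditiveFn [Semigroup S] (a : S → ℂ) : Prop :=
  ∀ x y, a (x * y) = a x + a y

/-- A function additive on a subset `T` of `S`. -/
def IsAdditiveOnSet [Semigroup S] (a : S → ℂ) (T : Set S) : Prop :=
  ∀ x ∈ T, ∀ y ∈ T, a (x * y) = a x + a y

/-- A function multiplicative on a subset `T` of `S`. -/
def IsMultiplicativeOnSet [Semigroup S] (χ : S → ℂ) (T : Set S) : Prop :=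
  ∀ x ∈ T, ∀ y ∈ T, χ (x * y) = χ x * χ y

/-- `Ψ_χ(φ) (x) = χ(x) φ(x)` for `x ∉ I_χ` and `0` on `I_χ = {x | χ x = 0}`.
Functions on `S ∖ I_χ` are represented as functions on `S` whose values
off `{x | χ x ≠ 0}` are irrelevant. -/
noncomputable def PsiFn [Semigroup S] (χ φ : S → ℂ) : S → ℂ :=
  fun x => if χ x = 0 then 0 else χ x * φ x

/-- `S` is generated by its squares. -/
def SquareGenerated (S : Type*) [Semigroup S] : Prop :=
  ∀ x : S, x ∈ Subsemigroup.closure {y : S | ∃ z : S, y = z * z}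

/- ------------------------------------------------------------------ -/
/- Auxiliary lemmas -/

/-- Dedekind's lemma for semigroups: distinct nonzero multiplicative
functions are linearly independent (finset form). -/
lemma dedekind_aux [Semigroup S] (T : Finset (S → ℂ)) :
    ∀ (d : (S → ℂ) → ℂ), (∀ ρ ∈ T, IsMultiplicativeFn ρ) → (∀ ρ ∈ T, ρ ≠ 0) →
      (∀ x, ∑ ρ ∈ T, d ρ * ρ x = 0) → ∀ ρ ∈ T, d ρ = 0 := by
  classical
  induction T using Finset.strongInduction with
  | _ T ih =>
    intro d hmul hnz hrel ρ₀ hρ₀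
    by_cases hone : ∀ ρ ∈ T, ρ = ρ₀
    · -- T = {ρ₀}
      have hT : T = {ρ₀} := by
        apply Finset.eq_singleton_iff_unique_mem.mpr
        exact ⟨hρ₀, hone⟩
      obtain ⟨x, hx⟩ : ∃ x, ρ₀ x ≠ 0 := by
        by_contra hc
        push_neg at hc
        exact hnz ρ₀ hρ₀ (funext fun x => hc x)
      have := hrel x
      rw [hT, Finset.sum_singleton] at this
      exact (mul_eq_zero.mp this).resolve_right hx
    · push_neg at hone
      obtain ⟨ρ₁, hρ₁T, hρ₁ne⟩ := hone
      obtain ⟨z, hz⟩ : ∃ z, ρ₀ z ≠ ρ₁ z := by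
        by_contra hc
        push_neg at hc
        exact hρ₁ne (funext fun z => (hc z).symm)
      have hρ₀ne : ρ₀ ≠ ρ₁ := fun hh => hρ₁ne hh.symm
      set T' := T.erase ρ₁ with hT'
      have hsub : T' ⊂ T := Finset.erase_ssubset hρ₁T
      have hrel' : ∀ x, ∑ ρ ∈ T', (fun ρ => d ρ * (ρ z - ρ₁ z)) ρ * ρ x = 0 := by
        intro x
        have e0 : ∑ ρ ∈ T, d ρ * (ρ z - ρ₁ z) * ρ x = 0 := by
          have e1 : ∑ ρ ∈ T, d ρ * (ρ z - ρ₁ z) * ρ x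
              = (∑ ρ ∈ T, d ρ * ρ (x * z)) - ρ₁ z * ∑ ρ ∈ T, d ρ * ρ x := by
            rw [Finset.mul_sum, ← Finset.sum_sub_distrib]
            apply Finset.sum_congr rfl
            intro ρ hρ
            rw [hmul ρ hρ x z]
            ring
          rw [e1, hrel (x * z), hrel x, mul_zero, sub_zero]
        have e2 : ∑ ρ ∈ T, d ρ * (ρ z - ρ₁ z) * ρ x
            = ∑ ρ ∈ T', d ρ * (ρ z - ρ₁ z) * ρ x := by
          rw [hT']
          rw [← Finset.add_sum_erase T _ hρ₁T]
          simp
        rw [← e2]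
        exact e0
      have hmul' : ∀ ρ ∈ T', IsMultiplicativeFn ρ := fun ρ hρ =>
        hmul ρ (Finset.mem_of_mem_erase hρ)
      have hnz' : ∀ ρ ∈ T', ρ ≠ 0 := fun ρ hρ =>
        hnz ρ (Finset.mem_of_mem_erase hρ)
      have hρ₀T' : ρ₀ ∈ T' := Finset.mem_erase.mpr ⟨hρ₀ne, hρ₀⟩
      have := ih T' hsub (fun ρ => d ρ * (ρ z - ρ₁ z)) hmul' hnz' hrel' ρ₀ hρ₀T'
      have hzne : ρ₀ z - ρ₁ z ≠ 0 := sub_ne_zero.mpr hz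
      simpa [hzne] using this

/-- If `Ψ` satisfies the sine-addition law with a nonzero multiplicative `μ`
and lies in the span of multiplicative functions, then `Ψ = 0`. -/
lemma psi_vanish [Semigroup S] (μ Ψ : S → ℂ)
    (hμ : IsMultiplicativeFn μ) (hμ0 : μ ≠ 0)
    (hΨ : ∀ x y, Ψ (x * y) = μ x * Ψ y + μ y * Ψ x)
    (hspan : Ψ ∈ Submodule.span ℂ {g : S → ℂ | IsMultiplicativeFn g}) :
    Ψ = 0 := by
  classical
  obtain ⟨co, hsupp, hsum⟩ := Submodule.mem_span_set.mp hspan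
  set T : Finset (S → ℂ) := co.support.filter (fun g => g ≠ 0) with hTdef
  have hmulT : ∀ ρ ∈ T, IsMultiplicativeFn ρ := by
    intro ρ hρ
    have : ρ ∈ co.support := (Finset.mem_filter.mp hρ).1
    exact hsupp this
  have hnzT : ∀ ρ ∈ T, ρ ≠ 0 := fun ρ hρ => (Finset.mem_filter.mp hρ).2
  have hrep : ∀ x, ∑ ρ ∈ T, co ρ * ρ x = Ψ x := by
    intro x
    have h1 : ∑ ρ ∈ co.support, co ρ * ρ x = Ψ x := by
      have := congrFun hsum x
      rw [Finsupp.sum] at this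
      rw [← this]
      rw [Finset.sum_apply]
      apply Finset.sum_congr rfl
      intro ρ _
      simp [smul_eq_mul]
    rw [← h1]
    rw [hTdef]
    rw [Finset.sum_filter]
    apply Finset.sum_congr rfl
    intro ρ _
    by_cases hρ0 : ρ = 0
    · simp [hρ0]
    · simp [hρ0]
  -- pointwise vanishing
  funext y
  set U : Finset (S → ℂ) := insert μ T with hUdef
  set e : (S → ℂ) → ℂ := fun ρ =>
    (if ρ ∈ T then co ρ * (ρ y - μ y) else 0) + (if ρ = μ then -Ψ y else 0) with hedef
  have hrelU : ∀ x, ∑ ρ ∈ U, e ρ * ρ x = 0 := by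
    intro x
    have hsplit : ∑ ρ ∈ U, e ρ * ρ x
        = (∑ ρ ∈ U, (if ρ ∈ T then co ρ * (ρ y - μ y) * ρ x else 0))
          + ∑ ρ ∈ U, (if ρ = μ then -Ψ y * ρ x else 0) := by
      rw [← Finset.sum_add_distrib]
      apply Finset.sum_congr rfl
      intro ρ _
      rw [hedef]
      simp only
      by_cases h1 : ρ ∈ T <;> by_cases h2 : ρ = μ <;> simp [h1, h2]
    have hfirst : ∑ ρ ∈ U, (if ρ ∈ T then co ρ * (ρ y - μ y) * ρ x else 0)
        = ∑ ρ ∈ T, co ρ * (ρ y - μ y) * ρ x := by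
      rw [Finset.sum_ite_mem]
      congr 1
      rw [hUdef]
      exact Finset.inter_eq_right.mpr (Finset.subset_insert _ _)
    have hsecond : ∑ ρ ∈ U, (if ρ = μ then -Ψ y * ρ x else 0) = -Ψ y * μ x := by
      rw [Finset.sum_ite_eq' U μ (fun ρ => -Ψ y * ρ x)]
      simp [hUdef]
    have hmain : ∑ ρ ∈ T, co ρ * (ρ y - μ y) * ρ x = Ψ y * μ x := by
      have e1 : ∑ ρ ∈ T, co ρ * (ρ y - μ y) * ρ x
          = (∑ ρ ∈ T, co ρ * ρ (x * y)) - μ y * ∑ ρ ∈ T, co ρ * ρ x := by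
        rw [Finset.mul_sum, ← Finset.sum_sub_distrib]
        apply Finset.sum_congr rfl
        intro ρ hρ
        rw [hmulT ρ hρ x y]
        ring
      rw [e1, hrep (x * y), hrep x, hΨ x y]
      ring
    rw [hsplit, hfirst, hsecond, hmain]
    ring
  have hmulU : ∀ ρ ∈ U, IsMultiplicativeFn ρ := by
    intro ρ hρ
    rcases Finset.mem_insert.mp hρ with h | h
    · rw [h]; exact hμ
    · exact hmulT ρ h
  have hnzU : ∀ ρ ∈ U, ρ ≠ 0 := by
    intro ρ hρ
    rcases Finset.mem_insert.mp hρ with h | h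
    · rw [h]; exact hμ0
    · exact hnzT ρ h
  have heμ : e μ = 0 :=
    dedekind_aux U e hmulU hnzU hrelU μ (Finset.mem_insert_self μ T)
  rw [hedef] at heμ
  simp only at heμ
  have hΨy : Ψ y = 0 := by
    by_cases hμT : μ ∈ T
    · simpa [hμT] using heμ
    · simpa [hμT] using heμ
  simpa using hΨy

/-- The sine-addition law for `PsiFn`. -/
lemma psiFn_add [Semigroup S] (μ A : S → ℂ) (hμ : IsMultiplicativeFn μ)
    (hA : IsAdditiveOnSet A {x : S | μ x ≠ 0}) :
    ∀ x y, PsiFn μ A (x * y) = μ x * PsiFn μ A y + μ y * PsiFn μ A x := by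
  intro x y
  unfold PsiFn
  have hxy : μ (x * y) = μ x * μ y := hμ x y
  by_cases hx : μ x = 0
  · simp [hxy, hx]
  · by_cases hy : μ y = 0
    · simp [hxy, hy]
    · have hne : μ (x * y) ≠ 0 := by rw [hxy]; exact mul_ne_zero hx hy
      rw [if_neg hne, if_neg hx, if_neg hy, hxy, hA x hx y hy]
      ring

/-- If `Ψ_{μ₁}(A₁) + Ψ_{μ₂}(A₂)` equals a linear combination of
multiplicative functions on `S`, with `μ₁ ≠ μ₂` nonzero multiplicative, then
`Ψ_{μ₁}(A₁) + Ψ_{μ₂}(A₂) = 0`. -/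
theorem stmt5 [Semigroup S] (μ₁ μ₂ : S → ℂ)
    (hμ₁ : IsMultiplicativeFn μ₁) (hμ₁0 : μ₁ ≠ 0)
    (hμ₂ : IsMultiplicativeFn μ₂) (hμ₂0 : μ₂ ≠ 0) (hne : μ₁ ≠ μ₂)
    (A₁ A₂ : S → ℂ)
    (hA₁ : IsAdditiveOnSet A₁ {x : S | μ₁ x ≠ 0})
    (hA₂ : IsAdditiveOnSet A₂ {x : S | μ₂ x ≠ 0})
    (N : ℕ) (c : Fin N → ℂ) (χ : Fin N → S → ℂ)
    (hχ : ∀ j, IsMultiplicativeFn (χ j))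
    (h : ∀ x : S, PsiFn μ₁ A₁ x + PsiFn μ₂ A₂ x = ∑ j, c j * χ j x) :
    ∀ x : S, PsiFn μ₁ A₁ x + PsiFn μ₂ A₂ x = 0 := by
  classical
  set Ψ₁ := PsiFn μ₁ A₁ with hΨ₁def
  set Ψ₂ := PsiFn μ₂ A₂ with hΨ₂def
  have hadd₁ : ∀ x y, Ψ₁ (x * y) = μ₁ x * Ψ₁ y + μ₁ y * Ψ₁ x :=
    psiFn_add μ₁ A₁ hμ₁ hA₁
  have hadd₂ : ∀ x y, Ψ₂ (x * y) = μ₂ x * Ψ₂ y + μ₂ y * Ψ₂ x :=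
    psiFn_add μ₂ A₂ hμ₂ hA₂
  -- existence of points making the 2×2 matrix invertible
  obtain ⟨y₁, y₂, hdet⟩ : ∃ y₁ y₂, μ₁ y₁ * μ₂ y₂ - μ₁ y₂ * μ₂ y₁ ≠ 0 := by
    by_contra hc
    push_neg at hc
    obtain ⟨y₀, hy₀⟩ : ∃ y, μ₁ y ≠ 0 := by
      by_contra hcc
      push_neg at hcc
      exact hμ₁0 (funext fun y => hcc y)
    set t : ℂ := μ₂ y₀ / μ₁ y₀ with htdef
    have hμ₂eq : ∀ y, μ₂ y = t * μ₁ y := by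
      intro y
      have := hc y₀ y
      have h1 : μ₁ y₀ * μ₂ y = μ₁ y * μ₂ y₀ := by linear_combination this
      rw [htdef, div_mul_eq_mul_div, eq_div_iff hy₀]
      linear_combination h1
    have ht0 : t ≠ 0 := by
      intro ht
      apply hμ₂0
      funext y
      rw [hμ₂eq y, ht, zero_mul]
      rfl
    have ht1 : t = 1 := by
      have e1 : μ₂ (y₀ * y₀) = t * t * (μ₁ y₀ * μ₁ y₀) := by
        rw [hμ₂ y₀ y₀, hμ₂eq y₀]; ring
      have e2 : μ₂ (y₀ * y₀) = t * (μ₁ y₀ * μ₁ y₀) := by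
        rw [hμ₂eq (y₀ * y₀), hμ₁ y₀ y₀]
      have e3 : t * t * (μ₁ y₀ * μ₁ y₀) = t * (μ₁ y₀ * μ₁ y₀) := by
        rw [← e1, e2]
      have hμμ : μ₁ y₀ * μ₁ y₀ ≠ 0 := mul_ne_zero hy₀ hy₀
      have := mul_right_cancel₀ hμμ e3
      field_simp at this
      exact this
    apply hne
    funext y
    rw [hμ₂eq y, ht1, one_mul]
  -- key identity
  have key : ∀ y x, μ₁ y * Ψ₁ x + μ₂ y * Ψ₂ x
      = (∑ j, c j * χ j y * χ j x) - Ψ₁ y * μ₁ x - Ψ₂ y * μ₂ x := by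
    intro y x
    have h1 := h (x * y)
    rw [hadd₁ x y, hadd₂ x y] at h1
    have h2 : ∑ j, c j * χ j (x * y) = ∑ j, c j * χ j y * χ j x := by
      apply Finset.sum_congr rfl
      intro j _
      rw [hχ j x y]; ring
    rw [h2] at h1
    linear_combination h1
  -- membership in the span of multiplicative functions
  set M : Set (S → ℂ) := {g : S → ℂ | IsMultiplicativeFn g} with hMdef
  set V := Submodule.span ℂ M with hVdef
  set G : S → (S → ℂ) := fun y => fun x =>
    (∑ j, c j * χ j y * χ j x) - Ψ₁ y * μ₁ x - Ψ₂ y * μ₂ x with hGdef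
  have hGV : ∀ y, G y ∈ V := by
    intro y
    have hGexp : G y = (∑ j, (c j * χ j y) • χ j) - (Ψ₁ y) • μ₁ - (Ψ₂ y) • μ₂ := by
      funext x
      simp only [hGdef, Pi.sub_apply, Pi.smul_apply, smul_eq_mul, Finset.sum_apply]
    rw [hGexp]
    apply Submodule.sub_mem
    apply Submodule.sub_mem
    · exact Submodule.sum_mem _ (fun j _ =>
        Submodule.smul_mem _ _ (Submodule.subset_span (hχ j)))
    · exact Submodule.smul_mem _ _ (Submodule.subset_span hμ₁)
    · exact Submodule.smul_mem _ _ (Submodule.subset_span hμ₂)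
  set D : ℂ := μ₁ y₁ * μ₂ y₂ - μ₁ y₂ * μ₂ y₁ with hDdef
  have hΨ₁V : Ψ₁ ∈ V := by
    have hexp : Ψ₁ = (D⁻¹ * μ₂ y₂) • G y₁ - (D⁻¹ * μ₂ y₁) • G y₂ := by
      funext x
      have k1 : μ₁ y₁ * Ψ₁ x + μ₂ y₁ * Ψ₂ x = G y₁ x := key y₁ x
      have k2 : μ₁ y₂ * Ψ₁ x + μ₂ y₂ * Ψ₂ x = G y₂ x := key y₂ x
      have hDinv : D⁻¹ * D = 1 := inv_mul_cancel₀ hdet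
      simp only [Pi.sub_apply, Pi.smul_apply, smul_eq_mul]
      linear_combination (D⁻¹ * μ₂ y₂) * k1 - (D⁻¹ * μ₂ y₁) * k2
        + (D⁻¹ * Ψ₁ x) * hDdef - (Ψ₁ x) * hDinv
    rw [hexp]
    exact Submodule.sub_mem _ (Submodule.smul_mem _ _ (hGV y₁))
      (Submodule.smul_mem _ _ (hGV y₂))
  have hΨ₂V : Ψ₂ ∈ V := by
    have hexp : Ψ₂ = (D⁻¹ * μ₁ y₁) • G y₂ - (D⁻¹ * μ₁ y₂) • G y₁ := by
      funext x
      have k1 : μ₁ y₁ * Ψ₁ x + μ₂ y₁ * Ψ₂ x = G y₁ x := key y₁ x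
      have k2 : μ₁ y₂ * Ψ₁ x + μ₂ y₂ * Ψ₂ x = G y₂ x := key y₂ x
      have hDinv : D⁻¹ * D = 1 := inv_mul_cancel₀ hdet
      simp only [Pi.sub_apply, Pi.smul_apply, smul_eq_mul]
      linear_combination (D⁻¹ * μ₁ y₁) * k2 - (D⁻¹ * μ₁ y₂) * k1
        + (D⁻¹ * Ψ₂ x) * hDdef - (Ψ₂ x) * hDinv
    rw [hexp]
    exact Submodule.sub_mem _ (Submodule.smul_mem _ _ (hGV y₂))
      (Submodule.smul_mem _ _ (hGV y₁))
  have hΨ₁0 : Ψ₁ = 0 := psi_vanish μ₁ Ψ₁ hμ₁ hμ₁0 hadd₁ hΨ₁V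
  have hΨ₂0 : Ψ₂ = 0 := psi_vanish μ₂ Ψ₂ hμ₂ hμ₂0 hadd₂ hΨ₂V
  intro x
  rw [hΨ₁0, hΨ₂0]
  simp
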